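/- arXiv:1608.06176 — 4 statements merged into one kernel-verified Lean document; each statement's English description precedes it below -/
import Mathlib

section
/- Let $R$ be a commutative ring and $p \in R$. Let $f \geq 1$ and, for each $i \in \mathbb{Z}/f\mathbb{Z}$, let $M_i$ be an $R$-module, $\sigma_i : R \to R$ a ring homomorphism with $\sigma_i(p) = p$, and $V_i : M_i \to M_{i-1}$ an additive map which is $\sigma_i$-semilinear, i.e. $V_i(c \cdot m) = \sigma_i(c) \cdot V_i(m)$ for all $c \in R$, $m \in M_i$. For each $i$ let $q_i \in \mathbb{N}$ and assume there exist elements $g^i_1, \dots, g^i_{q_i} \in M_i$ such that the $R$-submodule of $M_i$ generated by the image of $V_{i+1}$ is contained in $\mathrm{span}_R(g^i_1, \dots, g^i_{q_i}) + p \cdot M_i$. Set $n := q_0$ and $k := \sum_{i \in \mathbb{Z}/f\mathbb{Z}} (q_0 - q_i)^+$ (truncated subtraction). Let $\Phi : M_0 \to M_0$ be the $f$-fold composite $M_0 = M_f \xrightarrow{V_f} M_{f-1} \to \cdots \to M_1 \xrightarrow{V_1} M_0$. Then for every tuple $v : \mathrm{Fin}\, n \to M_0$, the wedge $\Phi(v_1)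 \wedge \cdots \wedge \Phi(v_n)$ lies in the submodule $p^k \cdot \bigwedge^n M_0$ of the $n$-th exterior power $\bigwedge^n M_0$. -/
open Pointwise

/-- The canonical wedge of a tuple, landing in the `n`-th exterior power
(viewed as a submodule of the exterior algebra). -/
noncomputable def wedge (R : Type*) {M : Type*} [CommRing R] [AddCommGroup M] [Module R M]
    (n : ℕ) (v : Fin n → M) : ⋀[R]^n M :=
  ⟨ExteriorAlgebra.ιMulti R n v, ExteriorAlgebra.ιMulti_range R n ⟨v, rfl⟩⟩

/-- The composite `M (j : ZMod f) → M (j-1) → ⋯ → M 0` of a cyclic chain of maps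
`V i : M i → M (i - 1)`. -/
def chainComp {f : ℕ} {M : ZMod f → Type*} (V : ∀ i : ZMod f, M i → M (i - 1)) :
    (j : ℕ) → M ((j : ℕ) : ZMod f) → M 0
  | 0 => fun m => cast (congrArg M (by norm_num)) m
  | j + 1 => fun m =>
      chainComp V j (cast (congrArg M (by push_cast; ring)) (V (((j + 1 : ℕ) : ZMod f)) m))

/-- The `f`-fold composite `Φ : M 0 = M f → M (f-1) → ⋯ → M 0`. -/
def chainPhi {f : ℕ} {M : ZMod f → Type*} (V : ∀ i : ZMod f, M i → M (i - 1)) :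
    M 0 → M 0 :=
  fun m => chainComp V f (cast (congrArg M (ZMod.natCast_self f).symm) m)

open Function Finset

section MyAux

/-- One step of the chain, with the index cast cleaned up. -/
def myVc {f : ℕ} {M : ZMod f → Type*} (V : ∀ i : ZMod f, M i → M (i - 1)) (j : ℕ)
    (m : M ((j + 1 : ℕ) : ZMod f)) : M ((j : ℕ) : ZMod f) :=
  cast (congrArg M (by push_cast; ring)) (V ((j + 1 : ℕ) : ZMod f) m)

theorem chainComp_zero {f : ℕ} {M : ZMod f → Type*} (V : ∀ i : ZMod f, M i → M (i - 1))
    (m : M ((0 : ℕ) : ZMod f)) :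
    chainComp V 0 m = cast (congrArg M (by norm_num)) m := rfl

theorem chainComp_succ {f : ℕ} {M : ZMod f → Type*} (V : ∀ i : ZMod f, M i → M (i - 1))
    (j : ℕ) (m : M ((j + 1 : ℕ) : ZMod f)) :
    chainComp V (j + 1) m = chainComp V j (myVc V j m) := rfl

variable {R : Type*} [CommRing R] {N A : Type*} [AddCommGroup N] [Module R N]
  [AddCommGroup A] [Module R A] {n : ℕ}

theorem aux_piecewise_smul (τ : R →+* R) (F : MultilinearMap ℤ (fun _ : Fin n => N) A)
    (hFs : ∀ (u : Fin n → N) (l : Fin n) (c : R) (x : N),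
      F (update u l (c • x)) = τ c • F (update u l x))
    (c : Fin n → R) (u : Fin n → N) (T : Finset (Fin n)) :
    F (T.piecewise (fun l => c l • u l) u) = (∏ l ∈ T, τ (c l)) • F u := by
  classical
  induction T using Finset.induction_on with
  | empty => simp
  | @insert a T ha ih =>
      rw [Finset.piecewise_insert, hFs,
        Function.update_eq_self_iff.mpr (by simp [Finset.piecewise_eq_of_notMem _ _ _ ha]),
        ih, Finset.prod_insert ha, mul_smul]

theorem aux_vanish (τ : R →+* R) (F : MultilinearMap ℤ (fun _ : Fin n => N) A)
    (hFs : ∀ (u : Fin n → N) (l : Fin n) (c : R) (x : N),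
      F (update u l (c • x)) = τ c • F (update u l x))
    (hFa : ∀ (u : Fin n → N) (i j : Fin n), i ≠ j → u i = u j → F u = 0)
    {q' : ℕ} (h : Fin q' → N) (s : Finset (Fin n)) (hcard : q' < s.card)
    (w : Fin n → N) (hw : ∀ l ∈ s, w l ∈ Submodule.span R (Set.range h)) :
    F w = 0 := by
  classical
  have hb : ∀ l, ∃ b : Fin q' → R, l ∈ s → ∑ t, b t • h t = w l := by
    intro l
    by_cases hl : l ∈ s
    · obtain ⟨b, hb⟩ := (Submodule.mem_span_range_iff_exists_fun R).1 (hw l hl)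
      exact ⟨b, fun _ => hb⟩
    · exact ⟨0, fun h => absurd h hl⟩
  choose b hbb using hb
  set Afin : Fin n → Finset (Option (Fin q')) :=
    fun l => if l ∈ s then Finset.univ.image some else {none} with hA
  set g : (l : Fin n) → Option (Fin q') → N :=
    fun l o => o.elim (w l) (fun t => b l t • h t) with hg
  have hrepr : w = fun l => ∑ o ∈ Afin l, g l o := by
    funext l
    by_cases hl : l ∈ s
    · rw [hA]
      simp only [hl, if_true]
      rw [Finset.sum_image (fun x _ y _ hxy => Option.some_injective _ hxy)]
      exact (hbb l hl).symm
    · simp [hA, hg, hl]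
  rw [hrepr, F.map_sum_finset]
  apply Finset.sum_eq_zero
  intro r hr
  rw [Fintype.mem_piFinset] at hr
  obtain ⟨i, hi, j, hj, hij, hrij⟩ :
      ∃ i ∈ s, ∃ j ∈ s, i ≠ j ∧ r i = r j := by
    apply Finset.exists_ne_map_eq_of_card_lt_of_maps_to
      (t := (Finset.univ : Finset (Fin q')).image some)
    · rwa [Finset.card_image_of_injective _ (Option.some_injective _), Finset.card_univ,
        Fintype.card_fin]
    · intro l hl
      have := hr l
      simpa only [hA, Finset.mem_coe.1 hl, if_true, Finset.mem_coe] using this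
  set c' : Fin n → R := fun l => (r l).elim 1 (b l) with hc'
  set u' : Fin n → N := fun l => (r l).elim (w l) h with hu'
  have hfac : (fun l => g l (r l)) = Finset.univ.piecewise (fun l => c' l • u' l) u' := by
    funext l
    rw [Finset.piecewise_univ]
    rcases hrl : r l with _ | t
    · simp [hg, hc', hu', hrl]
    · simp [hg, hc', hu', hrl]
  rw [hfac, aux_piecewise_smul τ F hFs]
  have hFu' : F u' = 0 := by
    have hri : r i ∈ Finset.univ.image (some : Fin q' → Option (Fin q')) := by
      have := hr i
      simpa only [hA, hi, if_true] using this
    obtain ⟨t, -, ht⟩ := Finset.mem_image.1 hri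
    apply hFa u' i j hij
    rw [hu']
    simp only
    rw [← hrij, ← ht]
    rfl
  rw [hFu', smul_zero]

theorem aux_key (p : R) (τ : R →+* R) (hτ : τ p = p)
    (F : MultilinearMap ℤ (fun _ : Fin n => N) A)
    (hFs : ∀ (u : Fin n → N) (l : Fin n) (c : R) (x : N),
      F (update u l (c • x)) = τ c • F (update u l x))
    (hFa : ∀ (u : Fin n → N) (i j : Fin n), i ≠ j → u i = u j → F u = 0)
    {q' : ℕ} (h : Fin q' → N) (D : Submodule R N) (hh : ∀ t, h t ∈ D)
    (a : ℕ) (S : Submodule R A)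
    (H : ∀ w : Fin n → N, (∀ l, w l ∈ D) → F w ∈ p ^ a • S)
    (c z : Fin n → N) (hc : ∀ l, c l ∈ Submodule.span R (Set.range h))
    (hz : ∀ l, z l ∈ D) :
    F (fun l => c l + p • z l) ∈ p ^ (a + (n - q')) • S := by
  classical
  have hD : ∀ l, c l ∈ D := fun l =>
    Submodule.span_le.2 (Set.range_subset_iff.2 hh) (hc l)
  have expand : (fun l => c l + p • z l) = c + fun l => p • z l := rfl
  rw [expand, F.map_add_univ]
  apply Submodule.sum_mem
  intro s _
  have hps : s.piecewise c (fun l => p • z l)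
      = sᶜ.piecewise (fun l => p • (s.piecewise c z) l) (s.piecewise c z) := by
    funext l
    by_cases hl : l ∈ s
    · rw [Finset.piecewise_eq_of_mem _ _ _ hl,
        Finset.piecewise_eq_of_notMem _ _ _ (by simpa using hl),
        Finset.piecewise_eq_of_mem _ _ _ hl]
    · rw [Finset.piecewise_eq_of_notMem _ _ _ hl,
        Finset.piecewise_eq_of_mem _ _ _ (Finset.mem_compl.2 hl),
        Finset.piecewise_eq_of_notMem _ _ _ hl]
  rw [hps, aux_piecewise_smul τ F hFs, Finset.prod_const, hτ]
  have hcompl : sᶜ.card = n - s.card := by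
    rw [Finset.card_compl, Fintype.card_fin]
  by_cases hcase : s.card ≤ q'
  · have hmem : F (s.piecewise c z) ∈ p ^ a • S := by
      apply H
      intro l
      by_cases hl : l ∈ s
      · rw [Finset.piecewise_eq_of_mem _ _ _ hl]; exact hD l
      · rw [Finset.piecewise_eq_of_notMem _ _ _ hl]; exact hz l
    obtain ⟨y, hyS, hy⟩ := Set.mem_smul_set.1 hmem
    have heq : p ^ sᶜ.card • F (s.piecewise c z)
        = p ^ (a + (n - q')) • (p ^ (sᶜ.card - (n - q')) • y) := by
      rw [← hy, smul_smul, smul_smul, ← pow_add, ← pow_add]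
      congr 2
      omega
    rw [heq]
    exact Submodule.smul_mem_pointwise_smul (p ^ (sᶜ.card - (n - q')) • y)
      (p ^ (a + (n - q'))) S (S.smul_mem _ hyS)
  · rw [aux_vanish τ F hFs hFa h s (by omega) _
      (fun l hl => by rw [Finset.piecewise_eq_of_mem _ _ _ hl]; exact hc l), smul_zero]
    exact Submodule.zero_mem _

end MyAux

section WedgeML

variable (R : Type*) {M : Type*} [CommRing R] [AddCommGroup M] [Module R M]
  {N : Type*} [AddCommGroup N] [Module R N] (n : ℕ)

/-- The `ℤ`-multilinear map `u ↦ (φ u₁) ∧ ⋯ ∧ (φ uₙ)` for an additive map `φ`. -/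
noncomputable def wedgeML (φ : N → M) (hadd : ∀ x y, φ (x + y) = φ x + φ y) :
    MultilinearMap ℤ (fun _ : Fin n => N) ↥(⋀[R]^n M) where
  toFun u := wedge R n (fun l => φ (u l))
  map_update_add' := by
    intro dec u l x y
    have h1 : ∀ z : N, (fun l' => φ (Function.update u l z l'))
        = Function.update (fun l' => φ (u l')) l (φ z) := by
      intro z; funext l'
      rcases eq_or_ne l' l with rfl | hne
      · simp
      · simp [Function.update_of_ne hne]
    apply Subtype.ext
    show ExteriorAlgebra.ιMulti R n _
      = ExteriorAlgebra.ιMulti R n _ + ExteriorAlgebra.ιMulti R n _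
    rw [h1, h1, h1, hadd]
    exact (ExteriorAlgebra.ιMulti R n).map_update_add _ l _ _
  map_update_smul' := by
    intro dec u l z x
    have hφ : φ (z • x) = z • φ x :=
      map_zsmul (AddMonoidHom.mk' φ hadd) z x
    have h1 : ∀ w : N, (fun l' => φ (Function.update u l w l'))
        = Function.update (fun l' => φ (u l')) l (φ w) := by
      intro w; funext l'
      rcases eq_or_ne l' l with rfl | hne
      · simp
      · simp [Function.update_of_ne hne]
    apply Subtype.ext
    show ExteriorAlgebra.ιMulti R n _ = ((z • wedge R n _ : ↥(⋀[R]^n M)) : ExteriorAlgebra R M)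
    have hcoe : ((z • wedge R n (fun l' => φ (Function.update u l x l')) : ↥(⋀[R]^n M))
        : ExteriorAlgebra R M)
        = z • (ExteriorAlgebra.ιMulti R n (fun l' => φ (Function.update u l x l'))) := rfl
    rw [hcoe, h1, h1, hφ]
    exact map_zsmul (AddMonoidHom.mk'
      (fun y => ExteriorAlgebra.ιMulti R n (Function.update (fun l' => φ (u l')) l y))
      (fun a b => (ExteriorAlgebra.ιMulti R n).map_update_add _ l a b)) z (φ x)

theorem wedgeML_apply (φ : N → M) (hadd : ∀ x y, φ (x + y) = φ x + φ y) (u : Fin n → N) :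
    wedgeML R n φ hadd u = wedge R n (fun l => φ (u l)) := rfl

theorem wedgeML_smul (τ : R →+* R) (φ : N → M) (hadd : ∀ x y, φ (x + y) = φ x + φ y)
    (hsmul : ∀ (c : R) (x : N), φ (c • x) = τ c • φ x)
    (u : Fin n → N) (l : Fin n) (c : R) (x : N) :
    wedgeML R n φ hadd (update u l (c • x)) = τ c • wedgeML R n φ hadd (update u l x) := by
  have h1 : ∀ w : N, (fun l' => φ (Function.update u l w l'))
      = Function.update (fun l' => φ (u l')) l (φ w) := by
    intro w; funext l'
    rcases eq_or_ne l' l with rfl | hne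
    · simp
    · simp [Function.update_of_ne hne]
  apply Subtype.ext
  show ExteriorAlgebra.ιMulti R n _ = τ c • ExteriorAlgebra.ιMulti R n _
  rw [h1, h1, hsmul]
  exact (ExteriorAlgebra.ιMulti R n).map_update_smul _ l (τ c) (φ x)

theorem wedgeML_alt (φ : N → M) (hadd : ∀ x y, φ (x + y) = φ x + φ y)
    (u : Fin n → N) (i j : Fin n) (hij : i ≠ j) (hu : u i = u j) :
    wedgeML R n φ hadd u = 0 :=
  Subtype.ext ((ExteriorAlgebra.ιMulti R n).map_eq_zero_of_eq _ (congrArg φ hu) hij)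

end WedgeML

/-- divisibility of `⋀^n V^f` by `p ^ k`.  Given a cyclic chain of
semilinear maps `V i : M i → M (i-1)` over `R`, such that the image of each `V i`
is contained in a `q (i-1)`-generated submodule of `M (i-1)` plus `p • M (i-1)`,
with `n = q 0` and `k = ∑ i, (q 0 - q i)⁺`, every wedge
`Φ v₁ ∧ ⋯ ∧ Φ vₙ` of values of the `f`-fold composite `Φ` lies in
`p ^ k • ⋀^n (M 0)`. -/
theorem wedge_chainPhi_mem_pow_smul (f : ℕ) [NeZero f] {R : Type*} [CommRing R] (p : R)
    (M : ZMod f → Type*) [∀ i, AddCommGroup (M i)] [∀ i, Module R (M i)]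
    (σ : ZMod f → R →+* R) (hσ : ∀ i, σ i p = p)
    (V : ∀ i : ZMod f, M i → M (i - 1))
    (hVadd : ∀ (i : ZMod f) (x y : M i), V i (x + y) = V i x + V i y)
    (hVsmul : ∀ (i : ZMod f) (c : R) (m : M i), V i (c • m) = σ i c • V i m)
    (q : ZMod f → ℕ)
    (hq : ∀ i : ZMod f, ∃ g : Fin (q (i - 1)) → M (i - 1),
      Submodule.span R (Set.range (V i)) ≤
        Submodule.span R (Set.range g) ⊔ p • (⊤ : Submodule R (M (i - 1))))
    (n k : ℕ) (hn : n = q 0) (hk : k = ∑ i : ZMod f, (q 0 - q i))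
    (v : Fin n → M 0) :
    wedge R n (fun j => chainPhi V (v j)) ∈
      p ^ k • (⊤ : Submodule R ↥(⋀[R]^n (M 0))) := by
  classical
  obtain ⟨f0, rfl⟩ : ∃ f0, f = f0 + 1 :=
    ⟨f - 1, (Nat.succ_pred_eq_of_pos (Nat.pos_of_ne_zero (NeZero.ne f))).symm⟩
  -- cast lemmas
  have hcast_add : ∀ {i i' : ZMod (f0 + 1)} (e : i = i') (x y : M i),
      cast (congrArg M e) (x + y) = cast (congrArg M e) x + cast (congrArg M e) y := by
    intro i i' e
    subst e
    intro x y
    rfl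
  have hcast_smul : ∀ {i i' : ZMod (f0 + 1)} (e : i = i') (c : R) (x : M i),
      cast (congrArg M e) (c • x) = c • cast (congrArg M e) x := by
    intro i i' e
    subst e
    intro c x
    rfl
  -- basic properties of `myVc`
  have hVc_add : ∀ (j : ℕ) (x y : M ((j + 1 : ℕ) : ZMod (f0 + 1))),
      myVc V j (x + y) = myVc V j x + myVc V j y := by
    intro j x y
    unfold myVc
    rw [hVadd]
    exact hcast_add (by push_cast; ring) _ _
  have hVc_smul : ∀ (j : ℕ) (c : R) (x : M ((j + 1 : ℕ) : ZMod (f0 + 1))),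
      myVc V j (c • x) = σ ((j + 1 : ℕ) : ZMod (f0 + 1)) c • myVc V j x := by
    intro j c x
    unfold myVc
    rw [hVsmul]
    exact hcast_smul (by push_cast; ring) _ _
  have hVc_psmul : ∀ (j : ℕ) (x : M ((j + 1 : ℕ) : ZMod (f0 + 1))),
      myVc V j (p • x) = p • myVc V j x := by
    intro j x
    rw [hVc_smul, hσ]
  have hVc_zero : ∀ (j : ℕ), myVc V j (0 : M ((j + 1 : ℕ) : ZMod (f0 + 1))) = 0 := by
    intro j
    rw [show (0 : M ((j + 1 : ℕ) : ZMod (f0 + 1))) = (0 : R) • 0 by rw [zero_smul],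
      hVc_smul, map_zero, zero_smul]
  -- additivity of `chainComp`
  have hCadd : ∀ (j : ℕ) (x y : M ((j : ℕ) : ZMod (f0 + 1))),
      chainComp V j (x + y) = chainComp V j x + chainComp V j y := by
    intro j
    induction j with
    | zero =>
        intro x y
        rw [chainComp_zero, chainComp_zero, chainComp_zero]
        exact hcast_add (by norm_num) x y
    | succ j ih =>
        intro x y
        rw [chainComp_succ, chainComp_succ, chainComp_succ, hVc_add]
        exact ih _ _
  -- the semilinearity ring homs
  let τc : ℕ → R →+* R := fun j =>
    Nat.rec (RingHom.id R) (fun j' t => t.comp (σ ((j' + 1 : ℕ) : ZMod (f0 + 1)))) j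
  have hτc_succ : ∀ (j : ℕ) (c : R), τc (j + 1) c = τc j (σ ((j + 1 : ℕ) : ZMod (f0 + 1)) c) :=
    fun j c => rfl
  have hτcp : ∀ j : ℕ, τc j p = p := by
    intro j
    induction j with
    | zero => rfl
    | succ j ih => rw [hτc_succ, hσ, ih]
  have hCsmul : ∀ (j : ℕ) (c : R) (x : M ((j : ℕ) : ZMod (f0 + 1))),
      chainComp V j (c • x) = τc j c • chainComp V j x := by
    intro j
    induction j with
    | zero =>
        intro c x
        rw [chainComp_zero, chainComp_zero]
        exact hcast_smul (by norm_num) c x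
    | succ j ih =>
        intro c x
        rw [chainComp_succ, chainComp_succ, hVc_smul, ih, hτc_succ]
  -- the multilinear maps
  let Fj : ∀ j : ℕ, MultilinearMap ℤ (fun _ : Fin n => M ((j : ℕ) : ZMod (f0 + 1)))
      ↥(⋀[R]^n (M (0 : ZMod (f0 + 1)))) :=
    fun j => wedgeML R n (chainComp V j) (hCadd j)
  have hFs : ∀ (j : ℕ) (u : Fin n → M ((j : ℕ) : ZMod (f0 + 1))) (l : Fin n) (c : R)
      (x : M ((j : ℕ) : ZMod (f0 + 1))),
      Fj j (update u l (c • x)) = τc j c • Fj j (update u l x) :=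
    fun j => wedgeML_smul R n (τc j) (chainComp V j) (hCadd j) (hCsmul j)
  have hFa : ∀ (j : ℕ) (u : Fin n → M ((j : ℕ) : ZMod (f0 + 1))) (i l : Fin n),
      i ≠ l → u i = u l → Fj j u = 0 :=
    fun j => wedgeML_alt R n (chainComp V j) (hCadd j)
  -- semilinear image of a span under `myVc`
  have himg : ∀ (j : ℕ) {qq : ℕ} (gx : Fin qq → M ((j + 1 : ℕ) : ZMod (f0 + 1)))
      (y : M ((j + 1 : ℕ) : ZMod (f0 + 1))),
      y ∈ Submodule.span R (Set.range gx) →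
      myVc V j y ∈ Submodule.span R (Set.range (fun t => myVc V j (gx t))) := by
    intro j qq gx y hy
    refine Submodule.span_induction ?_ ?_ ?_ ?_ hy
    · rintro _ ⟨t, rfl⟩
      exact Submodule.subset_span ⟨t, rfl⟩
    · rw [hVc_zero]
      exact Submodule.zero_mem _
    · intro a b _ _ ha hb
      rw [hVc_add]
      exact Submodule.add_mem _ ha hb
    · intro r a _ ha
      rw [hVc_smul]
      exact Submodule.smul_mem _ _ ha
  -- transport of the generation hypothesis along a cast
  have hcast_sup : ∀ {i i' : ZMod (f0 + 1)} (e : i = i') (x : M i) {qq : ℕ} (gx : Fin qq → M i),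
      x ∈ Submodule.span R (Set.range gx) ⊔ p • (⊤ : Submodule R (M i)) →
      cast (congrArg M e) x ∈
        Submodule.span R (Set.range (fun t => cast (congrArg M e) (gx t)))
          ⊔ p • (⊤ : Submodule R (M i')) := by
    intro i i' e
    subst e
    intro x qq gx hx
    exact hx
  -- the main induction
  have key : ∀ (j : ℕ) (u : Fin n → M ((j : ℕ) : ZMod (f0 + 1))),
      (∀ l, u l ∈ Submodule.span R (Set.range (myVc V j))) →
      wedge R n (fun l => chainComp V j (u l)) ∈
        p ^ (∑ i ∈ Finset.range (j + 1), (n - q ((i : ℕ) : ZMod (f0 + 1)))) •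
          (⊤ : Submodule R ↥(⋀[R]^n (M (0 : ZMod (f0 + 1))))) := by
    intro j
    induction j with
    | zero =>
        intro u hu
        have h0 : (∑ i ∈ Finset.range (0 + 1), (n - q ((i : ℕ) : ZMod (f0 + 1)))) = 0 := by
          simp [hn]
        rw [h0, pow_zero, one_smul]
        exact Submodule.mem_top
    | succ j ih =>
        intro u hu
        obtain ⟨g, hg⟩ := hq ((j + 1 + 1 : ℕ) : ZMod (f0 + 1))
        have e : ((j + 1 + 1 : ℕ) : ZMod (f0 + 1)) - 1 = ((j + 1 : ℕ) : ZMod (f0 + 1)) := by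
          push_cast
          ring
        set gg : Fin (q (((j + 1 + 1 : ℕ) : ZMod (f0 + 1)) - 1)) →
            M ((j + 1 : ℕ) : ZMod (f0 + 1)) := fun t => cast (congrArg M e) (g t) with hggdef
        have hu' : ∀ l, u l ∈ Submodule.span R (Set.range gg) ⊔
            p • (⊤ : Submodule R (M ((j + 1 : ℕ) : ZMod (f0 + 1)))) := by
          intro l
          refine Submodule.span_le.2 ?_ (hu l)
          rintro _ ⟨m, rfl⟩
          have hVm : V ((j + 1 + 1 : ℕ) : ZMod (f0 + 1)) m ∈
              Submodule.span R (Set.range g) ⊔ p • ⊤ :=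
            hg (Submodule.subset_span ⟨m, rfl⟩)
          exact hcast_sup e _ g hVm
        have hdecomp : ∀ l, ∃ x z, x ∈ Submodule.span R (Set.range gg) ∧ u l = x + p • z := by
          intro l
          obtain ⟨y, hy, w, hw, hyw⟩ := Submodule.mem_sup.1 (hu' l)
          obtain ⟨w', -, rfl⟩ := Set.mem_smul_set.1 hw
          exact ⟨y, w', hy, hyw.symm⟩
        choose x z hx hxz using hdecomp
        have hres := aux_key p (τc j) (hτcp j) (Fj j) (hFs j) (hFa j)
          (fun t => myVc V j (gg t)) (Submodule.span R (Set.range (myVc V j)))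
          (fun t => Submodule.subset_span ⟨gg t, rfl⟩)
          (∑ i ∈ Finset.range (j + 1), (n - q ((i : ℕ) : ZMod (f0 + 1))))
          ⊤ (fun w hw => ih w hw)
          (fun l => myVc V j (x l)) (fun l => myVc V j (z l))
          (fun l => himg j gg (x l) (hx l))
          (fun l => Submodule.subset_span ⟨z l, rfl⟩)
        have hfun : (fun l => myVc V j (x l) + p • myVc V j (z l))
            = fun l => myVc V j (u l) := by
          funext l
          rw [hxz l, hVc_add, hVc_psmul]
        rw [hfun] at hres
        have hFform : Fj j (fun l => myVc V j (u l))
            = wedge R n (fun l => chainComp V (j + 1) (u l)) := rfl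
        rw [hFform] at hres
        have hexp : (∑ i ∈ Finset.range (j + 1), (n - q ((i : ℕ) : ZMod (f0 + 1))))
            + (n - q (((j + 1 + 1 : ℕ) : ZMod (f0 + 1)) - 1))
            = ∑ i ∈ Finset.range (j + 1 + 1), (n - q ((i : ℕ) : ZMod (f0 + 1))) := by
          conv_rhs => rw [Finset.sum_range_succ]
          rw [e]
        rw [hexp] at hres
        exact hres
  -- conclude
  have hu0 : ∀ l, myVc V f0 (cast (congrArg M (ZMod.natCast_self (f0 + 1)).symm) (v l)) ∈
      Submodule.span R (Set.range (myVc V f0)) :=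
    fun l => Submodule.subset_span ⟨_, rfl⟩
  have hres := key f0 _ hu0
  have hform : (fun l => chainComp V f0
        (myVc V f0 (cast (congrArg M (ZMod.natCast_self (f0 + 1)).symm) (v l))))
      = fun l => chainPhi V (v l) := rfl
  rw [hform] at hres
  have hksum : k = ∑ i ∈ Finset.range (f0 + 1), (n - q ((i : ℕ) : ZMod (f0 + 1))) := by
    rw [hk, hn]
    refine Finset.sum_nbij' (fun (a : ZMod (f0 + 1)) => a.val)
      (fun (a : ℕ) => ((a : ℕ) : ZMod (f0 + 1))) ?_ ?_ ?_ ?_ ?_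
    · intro a _
      exact Finset.mem_range.2 (ZMod.val_lt a)
    · intro a _
      exact Finset.mem_univ _
    · intro a _
      exact ZMod.natCast_rightInverse a
    · intro a ha
      exact ZMod.val_cast_of_lt (Finset.mem_range.1 ha)
    · intro a _
      rw [ZMod.natCast_rightInverse a]
  rw [hksum]
  exact hres
end

section
/- Let $R$ be a commutative ring, $p \in R$, $M$ an $R$-module and $N \subseteq M$ a submodule. Let $q \in \mathbb{N}$ and assume there exist elements $g_1, \dots, g_q \in M$ such that $N \subseteq \mathrm{span}_R(g_1, \dots, g_q) + p \cdot M$. Then for every $n \in \mathbb{N}$ and every tuple $v : \mathrm{Fin}\, n \to M$ with $v_j \in N$ for all $j$, the wedge $v_1 \wedge \cdots \wedge v_n$ lies in the submodule $p^{\,n-q} \cdot \bigwedge^n M$ of $\bigwedge^n M$ (with $n - q$ truncated subtraction, so the statement is vacuous for $n \leq q$). -/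
open Pointwise

/-- if a submodule `N` of `M` is contained in a `q`-generated submodule
plus `p • M`, then any wedge of `n` elements of `N` is divisible by `p ^ (n - q)` in
the `n`-th exterior power of `M`. -/
theorem wedge_mem_pow_smul_of_le_span_sup {R M : Type*} [CommRing R] [AddCommGroup M]
    [Module R M] (p : R) (N : Submodule R M) (q : ℕ)
    (hN : ∃ g : Fin q → M,
      N ≤ Submodule.span R (Set.range g) ⊔ p • (⊤ : Submodule R M))
    (n : ℕ) (v : Fin n → M) (hv : ∀ j, v j ∈ N) :
    wedge R n v ∈ p ^ (n - q) • (⊤ : Submodule R ↥(⋀[R]^n M)) := by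
  classical
  obtain ⟨g, hg⟩ := hN
  set F : M [⋀^Fin n]→ₗ[R] ↥(⋀[R]^n M) :=
    (ExteriorAlgebra.ιMulti R n).codRestrict (⋀[R]^n M)
      (fun v => ExteriorAlgebra.ιMulti_range R n ⟨v, rfl⟩) with hF
  have hwedge : wedge R n v = F v := rfl
  -- decompose each v j
  have hdec : ∀ j, ∃ (c : Fin q → R) (m : M), v j = (∑ k, c k • g k) + p • m := by
    intro j
    obtain ⟨y, hy, z, hz, hyz⟩ := Submodule.mem_sup.mp (hg (hv j))
    obtain ⟨c, hc⟩ := Submodule.mem_span_range_iff_exists_fun R |>.mp hy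
    have hz' : z ∈ p • ((⊤ : Submodule R M) : Set M) := by
      have : z ∈ ((p • (⊤ : Submodule R M) : Submodule R M) : Set M) := hz
      rwa [Submodule.coe_pointwise_smul] at this
    obtain ⟨m, -, hm⟩ := Set.mem_smul_set.mp hz'
    exact ⟨c, m, by rw [hc, hm, hyz]⟩
  choose c m hcm using hdec
  -- the summands
  set t : Fin n → Fin (q + 1) → M :=
    fun j k => if h : (k : ℕ) < q then c j ⟨k, h⟩ • g ⟨k, h⟩ else p • m j with ht
  have hvt : ∀ j, v j = ∑ k, t j k := by
    intro j
    rw [Fin.sum_univ_castSucc]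
    have h1 : ∀ k : Fin q, t j k.castSucc = c j k • g k := by
      intro k
      simp [ht, k.isLt]
    have h2 : t j (Fin.last q) = p • m j := by simp [ht]
    rw [h2, Finset.sum_congr rfl fun k _ => h1 k]
    exact hcm j
  have expand : F v = ∑ r : Fin n → Fin (q + 1), F (fun j => t j (r j)) := by
    have hveq : v = fun j => ∑ k, t j k := funext hvt
    rw [hveq]
    exact F.toMultilinearMap.map_sum (α := fun _ : Fin n => Fin (q + 1)) (g := t)
  rw [hwedge, expand]
  apply Submodule.sum_mem
  intro r _
  -- scalars and base vectors
  set a : Fin n → R := fun j => if h : (r j : ℕ) < q then c j ⟨r j, h⟩ else p with ha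
  set b : Fin n → M := fun j => if h : (r j : ℕ) < q then g ⟨r j, h⟩ else m j with hb
  have htab : (fun j => t j (r j)) = fun j => a j • b j := by
    funext j
    by_cases h : (r j : ℕ) < q <;> simp [ht, ha, hb, h]
  have hsmul : F (fun j => t j (r j)) = (∏ j, a j) • F b := by
    rw [htab]
    exact F.toMultilinearMap.map_smul_univ a b
  set S : Finset (Fin n) := Finset.univ.filter (fun j => (r j : ℕ) < q) with hS
  by_cases hcard : S.card ≤ q
  · -- at least n - q factors of p
    have hprod : ∏ j, a j = (∏ j ∈ S, a j) * p ^ (n - S.card) := by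
      rw [← Finset.prod_mul_prod_compl S a]
      congr 1
      rw [Finset.prod_congr rfl (fun j hj => ?_), Finset.prod_const,
        Finset.card_compl, Fintype.card_fin]
      have : ¬ (r j : ℕ) < q := by
        simpa [hS] using (Finset.mem_compl.mp hj)
      simp [ha, this]
    have hpow : p ^ (n - S.card) = p ^ (n - q) * p ^ ((n - S.card) - (n - q)) := by
      rw [← pow_add]
      congr 1
      omega
    rw [hsmul, hprod, hpow]
    have : ((∏ j ∈ S, a j) * (p ^ (n - q) * p ^ (n - S.card - (n - q)))) • F b
        = p ^ (n - q) • (((∏ j ∈ S, a j) * p ^ (n - S.card - (n - q))) • F b) := by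
      rw [← mul_smul]; ring_nf
    rw [this]
    exact Submodule.smul_mem_pointwise_smul _ _ _ trivial
  · -- two equal entries among the g's
    push_neg at hcard
    have hmaps : ∀ j ∈ S, (r j : ℕ) ∈ Finset.range q := by
      intro j hj
      simp only [hS, Finset.mem_filter] at hj
      exact Finset.mem_range.mpr hj.2
    obtain ⟨i, hi, j, hj, hij, hrij⟩ :=
      Finset.exists_ne_map_eq_of_card_lt_of_maps_to
        (by simpa using hcard) hmaps
    have hiq : (r i : ℕ) < q := by simpa [hS] using hi
    have hjq : (r j : ℕ) < q := by simpa [hS] using hj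
    have hbij : b i = b j := by
      simp only [hb, dif_pos hiq, dif_pos hjq]
      congr 1
      exact Fin.ext hrij
    rw [hsmul, F.map_eq_zero_of_eq b hbij hij, smul_zero]
    exact Submodule.zero_mem _
end

section
/- Let $R$ be a commutative ring, $m, n, l, k \in \mathbb{N}$, $A$ an $m \times n$ matrix over $R$ and $B$ an $n \times l$ matrix over $R$. For a matrix $X$ with rows indexed by a type $\alpha$ and columns indexed by a type $\beta$, let $I_k(X)$ denote the ideal of $R$ generated by the determinants of all $k \times k$ submatrices $X.\mathrm{submatrix}\, f\, g$, where $f : \mathrm{Fin}\, k \to \alpha$ and $g : \mathrm{Fin}\, k \to \beta$ range over all functions. Then $I_k(A \cdot B) \subseteq I_k(A) \cdot I_k(B)$. -/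
open Finset Equiv Matrix

/-- The ideal generated by the determinants of all `k × k` submatrices of `X`. -/
def minorsIdeal {R : Type*} [CommRing R] {α β : Type*} (k : ℕ) (X : Matrix α β R) :
    Ideal R :=
  Ideal.span {d : R | ∃ (f : Fin k → α) (g : Fin k → β), d = (X.submatrix f g).det}

/-- Multilinear expansion of the determinant of a (submatrix of a) product. -/
theorem det_mul_submatrix_aux {R : Type*} [CommRing R] {n l k : ℕ} (C : Matrix (Fin k) (Fin n) R)
    (D : Matrix (Fin n) (Fin l) R) (g : Fin k → Fin l) :
    ((C * D).submatrix id g).det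
      = ∑ p : Fin k → Fin n, (∏ i, C i (p i)) * (D.submatrix p g).det := by
  classical
  set F := (Matrix.detRowAlternating (n := Fin k) (R := R)).toMultilinearMap with hF
  have h1 : ((C * D).submatrix id g)
      = Matrix.of (fun i => ∑ x : Fin n, C i x • fun j => D x (g j)) := by
    ext i j
    simp [Matrix.mul_apply, Finset.sum_apply]
  rw [h1]
  calc (Matrix.of (fun i => ∑ x : Fin n, C i x • fun j => D x (g j))).det
      = F (fun i => ∑ x : Fin n, C i x • fun j => D x (g j)) := rfl
    _ = ∑ p : Fin k → Fin n, F (fun i => C i (p i) • fun j => D (p i) (g j)) :=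
        F.map_sum (g := fun i x => C i x • fun j => D x (g j))
    _ = ∑ p : Fin k → Fin n, (∏ i, C i (p i)) * (D.submatrix p g).det := by
        refine Finset.sum_congr rfl fun p _ => ?_
        rw [F.map_smul_univ]
        rfl

/-- Reindexing a sum over injective tuples as a sum over strictly monotone tuples
composed with permutations. -/
theorem sum_injective_eq_aux {M : Type*} [AddCommMonoid M] {n k : ℕ}
    (F : (Fin k → Fin n) → M) :
    ∑ p ∈ univ.filter (fun p : Fin k → Fin n => Function.Injective p), F p
      = ∑ q ∈ (univ.filter fun e : Fin k → Fin n => StrictMono e) ×ˢ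
          (univ : Finset (Perm (Fin k))), F (q.1 ∘ ⇑q.2) := by
  classical
  refine Finset.sum_nbij' (i := fun p => (p ∘ ⇑(Tuple.sort p), (Tuple.sort p)⁻¹))
    (j := fun q => q.1 ∘ ⇑q.2) ?_ ?_ ?_ ?_ ?_
  · intro p hp
    rw [Finset.mem_filter] at hp
    rw [Finset.mem_product]
    refine ⟨Finset.mem_filter.2 ⟨Finset.mem_univ _, ?_⟩, Finset.mem_univ _⟩
    exact (Tuple.monotone_sort p).strictMono_of_injective
      (hp.2.comp (Tuple.sort p).injective)
  · intro q hq
    rw [Finset.mem_product, Finset.mem_filter] at hq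
    exact Finset.mem_filter.2 ⟨Finset.mem_univ _,
      (hq.1.2.injective).comp q.2.injective⟩
  · intro p hp
    funext x
    simp [Function.comp]
  · rintro ⟨e, σ⟩ hq
    rw [Finset.mem_product, Finset.mem_filter] at hq
    have he : StrictMono e := hq.1.2
    have h1 : (e ∘ ⇑σ) ∘ ⇑(Tuple.sort (e ∘ ⇑σ)) = e := by
      rw [Tuple.comp_perm_comp_sort_eq_comp_sort,
        Tuple.sort_eq_refl_iff_monotone.2 he.monotone]
      rfl
    have h2 : Tuple.sort (e ∘ ⇑σ) = σ⁻¹ := by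
      ext x
      have := congrFun h1 x
      have : σ ((Tuple.sort (e ∘ ⇑σ)) x) = x := he.injective this
      rw [show ((Tuple.sort (e ∘ ⇑σ)) x) = σ⁻¹ x from σ.injective (by simpa using this)]
    refine Prod.ext ?_ ?_
    · show (e ∘ ⇑σ) ∘ ⇑(Tuple.sort (e ∘ ⇑σ)) = e
      exact h1
    · show (Tuple.sort (e ∘ ⇑σ))⁻¹ = σ
      rw [h2, inv_inv]
  · intro p hp
    have : (p ∘ ⇑(Tuple.sort p)) ∘ ⇑(Tuple.sort p)⁻¹ = p := by
      funext x; simp [Function.comp]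
    rw [this]

/-- the ideal of `k × k` minors of a product of matrices is contained in
the product of the ideals of `k × k` minors of the factors. -/
theorem minorsIdeal_mul_le {R : Type*} [CommRing R] (m n l k : ℕ)
    (A : Matrix (Fin m) (Fin n) R) (B : Matrix (Fin n) (Fin l) R) :
    minorsIdeal k (A * B) ≤ minorsIdeal k A * minorsIdeal k B := by
  classical
  rw [minorsIdeal, Ideal.span_le]
  rintro d ⟨f, g, rfl⟩
  show _ ∈ minorsIdeal k A * minorsIdeal k B
  have hsub : (A * B).submatrix f g = ((A.submatrix f id * B).submatrix id g) := by
    ext i j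
    simp [Matrix.mul_apply]
  rw [hsub, det_mul_submatrix_aux]
  rw [← Finset.sum_filter_add_sum_filter_not Finset.univ
    (fun p : Fin k → Fin n => Function.Injective p)]
  have hzero : ∑ p ∈ univ.filter (fun p : Fin k → Fin n => ¬ Function.Injective p),
      (∏ i, (A.submatrix f id) i (p i)) * (B.submatrix p g).det = 0 := by
    refine Finset.sum_eq_zero fun p hp => ?_
    rw [Finset.mem_filter] at hp
    have : ∃ i j, p i = p j ∧ i ≠ j := by
      rw [Function.Injective] at hp
      push_neg at hp
      obtain ⟨i, j, hij, hne⟩ := hp.2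
      exact ⟨i, j, hij, hne⟩
    obtain ⟨i, j, hpij, hne⟩ := this
    rw [Matrix.det_zero_of_row_eq hne (by funext x; simp [hpij]), mul_zero]
  rw [hzero, add_zero, sum_injective_eq_aux
    (fun p => (∏ i, (A.submatrix f id) i (p i)) * (B.submatrix p g).det),
    Finset.sum_product]
  refine Ideal.sum_mem _ fun e he => ?_
  have key : ∑ σ : Perm (Fin k),
      (∏ i, (A.submatrix f id) i ((e ∘ ⇑σ) i)) * (B.submatrix (e ∘ ⇑σ) g).det
      = (A.submatrix f e).det * (B.submatrix e g).det := by
    have hperm : ∀ σ : Perm (Fin k), (B.submatrix (e ∘ ⇑σ) g)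
        = (B.submatrix e g).submatrix σ id := by
      intro σ; ext i j; simp
    calc ∑ σ : Perm (Fin k),
        (∏ i, (A.submatrix f id) i ((e ∘ ⇑σ) i)) * (B.submatrix (e ∘ ⇑σ) g).det
        = ∑ σ : Perm (Fin k),
            ((Perm.sign σ : ℤ) * ∏ i, A (f i) (e (σ i))) * (B.submatrix e g).det := by
          refine Finset.sum_congr rfl fun σ _ => ?_
          rw [hperm σ, Matrix.det_permute]
          simp only [Matrix.submatrix_apply, Function.comp_apply, id_eq]
          ring
      _ = (∑ σ : Perm (Fin k), (Perm.sign σ : ℤ) * ∏ i, A (f i) (e (σ i)))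
            * (B.submatrix e g).det := by rw [Finset.sum_mul]
      _ = (A.submatrix f e).det * (B.submatrix e g).det := by
          congr 1
          rw [← Matrix.det_transpose (A.submatrix f e), Matrix.det_apply']
          refine Finset.sum_congr rfl fun σ _ => ?_
          congr 1
  rw [key]
  exact Ideal.mul_mem_mul (Ideal.subset_span ⟨f, e, rfl⟩) (Ideal.subset_span ⟨e, g, rfl⟩)
end

section
/- Let $p$ be a prime number and $R$ a commutative ring which is complete and separated for the $p$-adic topology (i.e. $R$ is adically complete with respect to the ideal generated by $p$). Let $\rho : R \to R$ be a ring homomorphism. Let $r, s \in \mathbb{N}$, fix two distinct indices $a \neq b$ in $\mathrm{Fin}\, r$, and let $C_1$ be an $r \times s$ matrix, $C_2$ an invertible $s \times s$ matrix, $C_3$ an $r \times r$ matrix, $C_4$ an $s \times r$ matrix over $R$. Let $N$ be an $r \times r$ matrix over $R$ all of whose entries lie in $pR$, except the $(a,b)$ entry which is congruent to $1$ modulo $pR$. Then the matrix equation $C_1 + X \cdot C_2 + (N + p\, C_3) \cdot X^{\rho} + p\, X \cdot C_4 \cdot X^{\rho} = 0$ has a solution $X$ in the $r \times s$ matrices over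 $R$, where $X^{\rho}$ denotes the matrix obtained from $X$ by applying $\rho$ to each entry. -/
open Matrix

section MatrixEqAux

variable {R : Type*} [CommRing R]

private lemma mes_rho_pow_mem (ρ : R →+* R) {p : ℕ} (n : ℕ) {x : R}
    (hx : x ∈ Ideal.span {(p : R)} ^ n) : ρ x ∈ Ideal.span {(p : R)} ^ n := by
  rw [Ideal.span_singleton_pow, Ideal.mem_span_singleton] at hx ⊢
  obtain ⟨y, rfl⟩ := hx
  exact ⟨ρ y, by simp [_root_.map_mul, map_pow]⟩

variable {m n k : ℕ}

private lemma mes_mul_mem_left {I : Ideal R} {M : Matrix (Fin m) (Fin n) R}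
    (hM : ∀ i j, M i j ∈ I) (P : Matrix (Fin n) (Fin k) R) :
    ∀ i j, (M * P) i j ∈ I := by
  intro i j
  rw [Matrix.mul_apply]
  exact Ideal.sum_mem _ fun c _ => Ideal.mul_mem_right _ _ (hM i c)

private lemma mes_mul_mem_right {I : Ideal R} (M : Matrix (Fin m) (Fin n) R)
    {P : Matrix (Fin n) (Fin k) R} (hP : ∀ i j, P i j ∈ I) :
    ∀ i j, (M * P) i j ∈ I := by
  intro i j
  rw [Matrix.mul_apply]
  exact Ideal.sum_mem _ fun c _ => Ideal.mul_mem_left _ _ (hP c j)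

private lemma mes_mul_mem_mul {I J : Ideal R} {M : Matrix (Fin m) (Fin n) R}
    {P : Matrix (Fin n) (Fin k) R} (hM : ∀ i j, M i j ∈ I) (hP : ∀ i j, P i j ∈ J) :
    ∀ i j, (M * P) i j ∈ I * J := by
  intro i j
  rw [Matrix.mul_apply]
  exact Ideal.sum_mem _ fun c _ => Ideal.mul_mem_mul (hM i c) (hP c j)

private lemma mes_stdBasis_mul_apply {r : ℕ} (a b : Fin r) (M : Matrix (Fin r) (Fin n) R)
    (i : Fin r) (j : Fin n) :
    (Matrix.single a b (1 : R) * M) i j = if i = a then M b j else 0 := by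
  simp [Matrix.mul_apply, Matrix.single, ite_and, eq_comm (a := a)]

end MatrixEqAux

/-- solvability of the matrix equation
`C₁ + X C₂ + (N + p C₃) X^ρ + p X C₄ X^ρ = 0` over a `p`-adically complete ring,
where `N` has all entries divisible by `p` except the `(a, b)` entry, which is
congruent to `1` modulo `p`. -/
theorem matrix_equation_solvable (p : ℕ) (hp : p.Prime) {R : Type*} [CommRing R]
    [IsAdicComplete (Ideal.span {(p : R)}) R] (ρ : R →+* R)
    (r s : ℕ) (a b : Fin r) (hab : a ≠ b)
    (C₁ : Matrix (Fin r) (Fin s) R) (C₂ : Matrix (Fin s) (Fin s) R) (hC₂ : IsUnit C₂)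
    (C₃ : Matrix (Fin r) (Fin r) R) (C₄ : Matrix (Fin s) (Fin r) R)
    (N : Matrix (Fin r) (Fin r) R)
    (hN : ∀ i j, ¬(i = a ∧ j = b) → N i j ∈ Ideal.span {(p : R)})
    (hNab : N a b - 1 ∈ Ideal.span {(p : R)}) :
    ∃ X : Matrix (Fin r) (Fin s) R,
      C₁ + X * C₂ + (N + (p : R) • C₃) * X.map ρ + (p : R) • (X * C₄ * X.map ρ) = 0 := by
  set I : Ideal R := Ideal.span {(p : R)} with hIdef
  clear_value I
  obtain ⟨u, hu⟩ := hC₂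
  set B : Matrix (Fin s) (Fin s) R := ↑u⁻¹ with hBdef
  clear_value B
  have hBC : B * C₂ = 1 := by rw [hBdef, ← hu]; exact u.inv_mul
  set E : Matrix (Fin r) (Fin r) R := Matrix.single a b 1 with hEdef
  clear_value E
  have hp_mem : (p : R) ∈ I := by
    rw [hIdef]; exact Ideal.mem_span_singleton_self _
  have hρmem : ∀ (t : ℕ) (x : R), x ∈ I ^ t → ρ x ∈ I ^ t := by
    rw [hIdef]; exact fun t x hx => mes_rho_pow_mem ρ t hx
  have hmap_sub : ∀ (A A' : Matrix (Fin r) (Fin s) R),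
      (A - A').map ρ = A.map ρ - A'.map ρ := by
    intro A A'; ext i j; simp [Matrix.map_apply, Matrix.sub_apply]
  have hEmul : ∀ (M : Matrix (Fin r) (Fin s) R) i j,
      (E * M) i j = if i = a then M b j else 0 := by
    intro M i j; rw [hEdef]; exact mes_stdBasis_mul_apply a b M i j
  have hEzero : ∀ (M : Matrix (Fin r) (Fin s) R), E * ((E * M).map ρ) = 0 := by
    intro M; ext i j
    rw [hEmul, Matrix.zero_apply]
    by_cases h : i = a
    · simp [h, Matrix.map_apply, hEmul, Ne.symm hab]
    · simp [h]
  -- the basic linear operator and its explicit section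
  set Sf : Matrix (Fin r) (Fin s) R → Matrix (Fin r) (Fin s) R :=
    fun A => (A - E * ((A * B).map ρ)) * B with hSf
  clear_value Sf
  have hSolve : ∀ A, Sf A * C₂ + E * (Sf A).map ρ = A := by
    intro A
    set W : Matrix (Fin r) (Fin s) R := (A * B).map ρ with hW
    have e1 : Sf A * C₂ = A - E * W := by
      simp only [hSf]; rw [Matrix.mul_assoc, hBC, Matrix.mul_one]
    have e2 : (Sf A).map ρ = (A * B).map ρ - (E * (W * B)).map ρ := by
      simp only [hSf]
      rw [Matrix.sub_mul, hmap_sub, Matrix.mul_assoc]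
    have e3 : E * ((E * (W * B)).map ρ) = 0 := hEzero _
    rw [e1, e2, Matrix.mul_sub, e3, ← hW]
    abel
  have hSsub : ∀ A A', Sf A - Sf A' = Sf (A - A') := by
    intro A A'
    simp only [hSf]
    rw [← Matrix.sub_mul]
    congr 1
    rw [Matrix.sub_mul, hmap_sub, Matrix.mul_sub]
    abel
  have hSmem : ∀ (t : ℕ) A, (∀ i j, A i j ∈ I ^ t) → ∀ i j, Sf A i j ∈ I ^ t := by
    intro t A hA i j
    simp only [hSf]
    refine mes_mul_mem_left (fun i j => ?_) B i j
    rw [Matrix.sub_apply]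
    refine sub_mem (hA i j) ?_
    refine mes_mul_mem_right E (fun i j => ?_) i j
    rw [Matrix.map_apply]
    exact hρmem t _ (mes_mul_mem_left hA B i j)
  -- the "contracting" part of the equation
  set Mf : Matrix (Fin r) (Fin s) R → Matrix (Fin r) (Fin s) R :=
    fun X => (N + (p : R) • C₃ - E) * X.map ρ + (p : R) • (X * C₄ * X.map ρ) with hMf
  clear_value Mf
  have hNEmem : ∀ i j, (N + (p : R) • C₃ - E) i j ∈ I := by
    intro i j
    by_cases h : i = a ∧ j = b
    · obtain ⟨rfl, rfl⟩ := h
      have hE1 : E i j = 1 := by simp [hEdef, Matrix.single]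
      rw [Matrix.sub_apply, Matrix.add_apply, Matrix.smul_apply, hE1, smul_eq_mul]
      have : N i j + (p : R) * C₃ i j - 1 = (N i j - 1) + (p : R) * C₃ i j := by ring
      rw [this]
      exact add_mem hNab (Ideal.mul_mem_right _ _ hp_mem)
    · have hE0 : E i j = 0 := by
        simp only [hEdef, Matrix.single, Matrix.of_apply]
        rw [if_neg]
        intro ⟨h1, h2⟩
        exact h ⟨h1.symm, h2.symm⟩
      rw [Matrix.sub_apply, Matrix.add_apply, Matrix.smul_apply, hE0, sub_zero, smul_eq_mul]
      exact add_mem (hN i j h) (Ideal.mul_mem_right _ _ hp_mem)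
  have hIpow_succ : ∀ t : ℕ, I * I ^ t ≤ I ^ (t + 1) := by
    intro t; rw [pow_succ, mul_comm]
  have hContract : ∀ (t : ℕ) (X X' : Matrix (Fin r) (Fin s) R),
      (∀ i j, (X - X') i j ∈ I ^ t) → ∀ i j, (Mf X - Mf X') i j ∈ I ^ (t + 1) := by
    intro t X X' h i j
    have hD : ∀ i j, ((X - X').map ρ) i j ∈ I ^ t := by
      intro i j; rw [Matrix.map_apply]; exact hρmem t _ (h i j)
    have key : Mf X - Mf X' =
        (N + (p : R) • C₃ - E) * ((X - X').map ρ) +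
          (p : R) • ((X - X') * C₄ * X.map ρ + X' * C₄ * ((X - X').map ρ)) := by
      simp only [hMf]
      rw [hmap_sub]
      simp only [Matrix.mul_sub, Matrix.sub_mul, smul_sub, smul_add]
      abel
    rw [key, Matrix.add_apply]
    refine add_mem (hIpow_succ t (mes_mul_mem_mul hNEmem hD i j)) ?_
    rw [Matrix.smul_apply, smul_eq_mul]
    refine hIpow_succ t (Ideal.mul_mem_mul hp_mem ?_)
    rw [Matrix.add_apply]
    refine add_mem ?_ ?_
    · exact mes_mul_mem_left (mes_mul_mem_left h C₄) (X.map ρ) i j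
    · exact mes_mul_mem_right _ hD i j
  -- the recursion
  set Gf : Matrix (Fin r) (Fin s) R → Matrix (Fin r) (Fin s) R :=
    fun X => Sf (-(C₁ + Mf X)) with hGf
  clear_value Gf
  have hFn : ∀ X : Matrix (Fin r) (Fin s) R,
      C₁ + X * C₂ + (N + (p : R) • C₃) * X.map ρ + (p : R) • (X * C₄ * X.map ρ) =
        C₁ + (X * C₂ + E * X.map ρ) + Mf X := by
    intro X
    simp only [hMf]
    rw [Matrix.sub_mul]
    abel
  have hFG : ∀ X : Matrix (Fin r) (Fin s) R,
      C₁ + (Gf X * C₂ + E * (Gf X).map ρ) + Mf (Gf X) = Mf (Gf X) - Mf X := by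
    intro X
    simp only [hGf]
    rw [hSolve]
    abel
  set Y : ℕ → Matrix (Fin r) (Fin s) R := fun n => Gf^[n] 0 with hY
  have hYsucc : ∀ n, Y (n + 1) = Gf (Y n) := by
    intro n; simp only [hY]; exact Function.iterate_succ_apply' Gf n 0
  clear_value Y
  have hYd : ∀ n, ∀ i j, (Y (n + 1) - Y n) i j ∈ I ^ n := by
    intro n
    induction n with
    | zero =>
      intro i j
      rw [pow_zero, Ideal.one_eq_top]
      exact Submodule.mem_top
    | succ n ih =>
      intro i j
      have h1 : Y (n + 2) - Y (n + 1) = Sf (Mf (Y n) - Mf (Y (n + 1))) := by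
        rw [hYsucc (n + 1), hYsucc n]
        simp only [hGf]
        rw [hSsub]
        congr 1
        abel
      rw [h1]
      refine hSmem (n + 1) _ (fun i j => ?_) i j
      have hneg : ∀ i j, (Y (n + 1) - Y n) i j ∈ I ^ n → (Y n - Y (n + 1)) i j ∈ I ^ n := by
        intro i j hx
        have : (Y n - Y (n + 1)) i j = -((Y (n + 1) - Y n) i j) := by
          simp only [Matrix.sub_apply]; ring
        rw [this]; exact neg_mem hx
      exact hContract n (Y n) (Y (n + 1)) (fun i j => hneg i j (ih i j)) i j
  have hYle : ∀ (m n' : ℕ), m ≤ n' → ∀ i j, (Y n' - Y m) i j ∈ I ^ m := by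
    intro m n' h
    induction n', h using Nat.le_induction with
    | base =>
      intro i j
      simp only [sub_self, Matrix.zero_apply]
      exact zero_mem _
    | succ n' hmn ih =>
      intro i j
      have hsplit : (Y (n' + 1) - Y m) i j = (Y (n' + 1) - Y n') i j + (Y n' - Y m) i j := by
        simp only [Matrix.sub_apply]; ring
      rw [hsplit]
      exact add_mem (Ideal.pow_le_pow_right hmn (hYd n' i j)) (ih i j)
  -- pass to the limit
  have hlim : ∀ i j, ∃ l : R, ∀ n, Y n i j - l ∈ I ^ n := by
    intro i j
    obtain ⟨L, hL⟩ := IsPrecomplete.prec (inferInstance : IsPrecomplete I R)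
      (f := fun n => Y n i j) (by
        intro m' n' hmn
        rw [SModEq.sub_mem, smul_eq_mul, Ideal.mul_top]
        have h1 := hYle m' n' hmn i j
        have h2 : Y m' i j - Y n' i j = -((Y n' - Y m') i j) := by
          simp only [Matrix.sub_apply]; ring
        rw [h2]
        exact neg_mem h1)
    refine ⟨L, fun n => ?_⟩
    have := hL n
    rwa [SModEq.sub_mem, smul_eq_mul, Ideal.mul_top] at this
  choose Xl hXl using hlim
  set Xf : Matrix (Fin r) (Fin s) R := Matrix.of (fun i j => Xl i j) with hXf
  clear_value Xf
  have hXd : ∀ n i j, (Xf - Y n) i j ∈ I ^ n := by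
    intro n i j
    have h2 : (Xf - Y n) i j = -(Y n i j - Xl i j) := by
      simp only [hXf, Matrix.sub_apply, Matrix.of_apply]; ring
    rw [h2]
    exact neg_mem (hXl i j n)
  refine ⟨Xf, ?_⟩
  have hentry : ∀ (n : ℕ) i j,
      (C₁ + Xf * C₂ + (N + (p : R) • C₃) * Xf.map ρ + (p : R) • (Xf * C₄ * Xf.map ρ)) i j
        ∈ I ^ n := by
    intro n i j
    have hFY : C₁ + (Y (n + 1) * C₂ + E * (Y (n + 1)).map ρ) + Mf (Y (n + 1)) =
        Mf (Y (n + 1)) - Mf (Y n) := by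
      rw [hYsucc n]; exact hFG (Y n)
    have hdec : C₁ + Xf * C₂ + (N + (p : R) • C₃) * Xf.map ρ + (p : R) • (Xf * C₄ * Xf.map ρ) =
        ((Xf - Y (n + 1)) * C₂ + E * ((Xf - Y (n + 1)).map ρ)) +
          (Mf Xf - Mf (Y (n + 1))) + (Mf (Y (n + 1)) - Mf (Y n)) := by
      rw [hFn Xf, ← hFY, hmap_sub, Matrix.sub_mul, Matrix.mul_sub]
      abel
    have hle1 : I ^ (n + 1) ≤ I ^ n := Ideal.pow_le_pow_right (Nat.le_succ n)
    have hle2 : I ^ (n + 2) ≤ I ^ n := Ideal.pow_le_pow_right (by omega)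
    rw [hdec, Matrix.add_apply, Matrix.add_apply, Matrix.add_apply]
    refine add_mem (add_mem (add_mem ?_ ?_) ?_) ?_
    · exact hle1 (mes_mul_mem_left (hXd (n + 1)) C₂ i j)
    · refine hle1 (mes_mul_mem_right E (fun i j => ?_) i j)
      rw [Matrix.map_apply]; exact hρmem (n + 1) _ (hXd (n + 1) i j)
    · exact hle2 (hContract (n + 1) Xf (Y (n + 1)) (hXd (n + 1)) i j)
    · exact hle1 (hContract n (Y (n + 1)) (Y n) (hYd n) i j)
  ext i j
  rw [Matrix.zero_apply]
  refine IsHausdorff.haus (inferInstance : IsHausdorff I R) _ (fun n => ?_)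
  rw [SModEq.zero, smul_eq_mul, Ideal.mul_top]
  exact hentry n i j
end
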